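/- Let g : (0,1] → ℝ be a nonnegative, monotone non-increasing, square-integrable function, and define h(x) = ∫_x^1 g(u)/u du. Then ∫_0^1 h(x)² dx ≤ 4 ∫_0^1 g(x)² dx. -/

import Mathlib

open MeasureTheory Set
open scoped ENNReal


lemma aux_pow32 {x : ℝ} (hx : 0 < x) (hx1 : x ≤ 1) :
    ∫⁻ u in Ioc x 1, ENNReal.ofReal (u ^ (-(3:ℝ)/2)) ≤ ENNReal.ofReal (2 * x ^ (-(1:ℝ)/2)) := by
  have hInt : IntervalIntegrable (fun u : ℝ => u ^ (-(3:ℝ)/2)) volume x 1 := by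
    apply intervalIntegral.intervalIntegrable_rpow
    right
    rw [uIcc_of_le hx1]
    intro h
    exact absurd (h.1) (not_le.2 hx)
  have hIntOn : IntegrableOn (fun u : ℝ => u ^ (-(3:ℝ)/2)) (Ioc x 1) volume :=
    (intervalIntegrable_iff_integrableOn_Ioc_of_le hx1).1 hInt
  have hnn : 0 ≤ᵐ[volume.restrict (Ioc x 1)] fun u : ℝ => u ^ (-(3:ℝ)/2) := by
    filter_upwards [ae_restrict_mem measurableSet_Ioc] with u hu
    exact Real.rpow_nonneg (le_of_lt (lt_trans hx hu.1)) _
  rw [← MeasureTheory.ofReal_integral_eq_lintegral_ofReal hIntOn hnn]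
  apply ENNReal.ofReal_le_ofReal
  have : ∫ u in Ioc x 1, u ^ (-(3:ℝ)/2) = ∫ u in x..1, u ^ (-(3:ℝ)/2) :=
    (intervalIntegral.integral_of_le hx1).symm
  rw [this, integral_rpow]
  · have h1 : (1:ℝ) ^ (-(3:ℝ)/2 + 1) = 1 := Real.one_rpow _
    have hx2 : x ^ (-(3:ℝ)/2 + 1) = x ^ (-(1:ℝ)/2) := by norm_num
    rw [h1, hx2]
    have : (1 - x ^ (-(1:ℝ)/2)) / (-(3:ℝ)/2 + 1) = 2 * x ^ (-(1:ℝ)/2) - 2 := by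
      ring_nf
    rw [this]
    linarith
  · right
    constructor
    · norm_num
    · rw [uIcc_of_le hx1]
      intro h
      exact absurd (h.1) (not_le.2 hx)

lemma aux_pow12 {u : ℝ} (hu : 0 < u) :
    ∫⁻ x in Ioo 0 u, ENNReal.ofReal (2 * x ^ (-(1:ℝ)/2)) = ENNReal.ofReal (4 * u ^ ((1:ℝ)/2)) := by
  have hInt : IntervalIntegrable (fun x : ℝ => 2 * x ^ (-(1:ℝ)/2)) volume 0 u := by
    apply IntervalIntegrable.const_mul
    apply intervalIntegral.intervalIntegrable_rpow'
    norm_num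
  have hIntOn : IntegrableOn (fun x : ℝ => 2 * x ^ (-(1:ℝ)/2)) (Ioc 0 u) volume :=
    (intervalIntegrable_iff_integrableOn_Ioc_of_le hu.le).1 hInt
  have hres : volume.restrict (Ioo (0:ℝ) u) = volume.restrict (Ioc 0 u) :=
    Measure.restrict_congr_set Ioo_ae_eq_Ioc
  rw [hres]
  have hnn : 0 ≤ᵐ[volume.restrict (Ioc 0 u)] fun x : ℝ => 2 * x ^ (-(1:ℝ)/2) := by
    filter_upwards [ae_restrict_mem measurableSet_Ioc] with x hx
    have h0 := hx.1
    positivity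
  rw [← MeasureTheory.ofReal_integral_eq_lintegral_ofReal hIntOn hnn]
  congr 1
  have : ∫ x in Ioc 0 u, 2 * x ^ (-(1:ℝ)/2) = ∫ x in (0:ℝ)..u, 2 * x ^ (-(1:ℝ)/2) :=
    (intervalIntegral.integral_of_le hu.le).symm
  rw [this, intervalIntegral.integral_const_mul, integral_rpow (Or.inl (by norm_num))]
  rw [Real.zero_rpow (by norm_num)]
  norm_num
  ring


lemma aux_cs (g : ℝ → ℝ) (hmeas : Measurable g) {x : ℝ} (hx : 0 < x) (hx1 : x ≤ 1) :
    (∫⁻ u in Ioc x 1, ENNReal.ofReal (g u / u)) ^ 2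
      ≤ ENNReal.ofReal (2 * x ^ (-(1:ℝ)/2)) *
        ∫⁻ u in Ioc x 1, (ENNReal.ofReal (g u))^2 * ENNReal.ofReal (u ^ (-(1:ℝ)/2)) := by
  set a : ℝ → ℝ≥0∞ := fun u => ENNReal.ofReal (g u) * ENNReal.ofReal u ^ (-(1:ℝ)/4) with ha
  set b : ℝ → ℝ≥0∞ := fun u => ENNReal.ofReal u ^ (-(3:ℝ)/4) with hb
  have hma : AEMeasurable a (volume.restrict (Ioc x 1)) := by
    apply Measurable.aemeasurable
    exact (ENNReal.measurable_ofReal.comp hmeas).mul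
      ((ENNReal.measurable_ofReal.comp measurable_id).pow_const _)
  have hmb : AEMeasurable b (volume.restrict (Ioc x 1)) := by
    apply Measurable.aemeasurable
    exact (ENNReal.measurable_ofReal.comp measurable_id).pow_const _
  have hpq : Real.HolderConjugate 2 2 := Real.HolderConjugate.two_two
  have hdecomp : ∫⁻ u in Ioc x 1, ENNReal.ofReal (g u / u)
      = ∫⁻ u in Ioc x 1, (a * b) u := by
    apply setLIntegral_congr_fun measurableSet_Ioc
    intro u hu
    have hu0 : 0 < u := lt_trans hx hu.1
    have hne : ENNReal.ofReal u ≠ 0 := by simp [hu0, hu0.not_ge]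
    have hnt : ENNReal.ofReal u ≠ ⊤ := ENNReal.ofReal_ne_top
    show ENNReal.ofReal (g u / u) = (ENNReal.ofReal (g u) * ENNReal.ofReal u ^ (-(1:ℝ)/4)) * ENNReal.ofReal u ^ (-(3:ℝ)/4)
    rw [ENNReal.ofReal_div_of_pos hu0, div_eq_mul_inv, mul_assoc,
      ← ENNReal.rpow_add _ _ hne hnt]
    norm_num
    rw [ENNReal.rpow_neg_one]
  have hCS := ENNReal.lintegral_mul_le_Lp_mul_Lq (volume.restrict (Ioc x 1)) hpq hma hmb
  rw [hdecomp]
  have hA : ∫⁻ u in Ioc x 1, a u ^ (2:ℝ)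
      = ∫⁻ u in Ioc x 1, (ENNReal.ofReal (g u))^2 * ENNReal.ofReal (u ^ (-(1:ℝ)/2)) := by
    apply setLIntegral_congr_fun measurableSet_Ioc
    intro u hu
    have hu0 : 0 < u := lt_trans hx hu.1
    rw [ha]
    simp only
    rw [ENNReal.mul_rpow_of_nonneg _ _ (by norm_num : (0:ℝ) ≤ 2),
      ← ENNReal.rpow_mul, ← ENNReal.ofReal_rpow_of_pos hu0]
    norm_num
  have hB : ∫⁻ u in Ioc x 1, b u ^ (2:ℝ) ≤ ENNReal.ofReal (2 * x ^ (-(1:ℝ)/2)) := by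
    have : ∫⁻ u in Ioc x 1, b u ^ (2:ℝ) = ∫⁻ u in Ioc x 1, ENNReal.ofReal (u ^ (-(3:ℝ)/2)) := by
      apply setLIntegral_congr_fun measurableSet_Ioc
      intro u hu
      have hu0 : 0 < u := lt_trans hx hu.1
      rw [hb]
      simp only
      rw [← ENNReal.rpow_mul, ← ENNReal.ofReal_rpow_of_pos hu0]
      norm_num
    rw [this]
    exact aux_pow32 hx hx1
  calc (∫⁻ u in Ioc x 1, (a * b) u) ^ 2
      ≤ ((∫⁻ u in Ioc x 1, a u ^ (2:ℝ)) ^ (1/(2:ℝ)) * (∫⁻ u in Ioc x 1, b u ^ (2:ℝ)) ^ (1/(2:ℝ))) ^ 2 := by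
        exact pow_le_pow_left' hCS 2
    _ = (∫⁻ u in Ioc x 1, a u ^ (2:ℝ)) * (∫⁻ u in Ioc x 1, b u ^ (2:ℝ)) := by
        rw [mul_pow, ← ENNReal.rpow_natCast (_ ^ (1/(2:ℝ))), ← ENNReal.rpow_natCast (_ ^ (1/(2:ℝ))),
          ← ENNReal.rpow_mul, ← ENNReal.rpow_mul]
        norm_num
    _ ≤ (∫⁻ u in Ioc x 1, (ENNReal.ofReal (g u))^2 * ENNReal.ofReal (u ^ (-(1:ℝ)/2)))
          * ENNReal.ofReal (2 * x ^ (-(1:ℝ)/2)) := by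
        rw [hA]
        exact mul_le_mul_right hB _
    _ = _ := mul_comm _ _

lemma aux_tonelli (g : ℝ → ℝ) (hmeas : Measurable g) :
    (∫⁻ x in Ioc (0:ℝ) 1, ENNReal.ofReal (2 * x ^ (-(1:ℝ)/2)) *
        ∫⁻ u in Ioc x 1, (ENNReal.ofReal (g u))^2 * ENNReal.ofReal (u ^ (-(1:ℝ)/2)))
      ≤ 4 * ∫⁻ u in Ioc (0:ℝ) 1, (ENNReal.ofReal (g u))^2 := by
  set ν := volume.restrict (Ioc (0:ℝ) 1) with hν
  set w : ℝ → ℝ≥0∞ := fun x => ENNReal.ofReal (2 * x ^ (-(1:ℝ)/2)) with hw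
  set Φ : ℝ → ℝ≥0∞ := fun u => (ENNReal.ofReal (g u))^2 * ENNReal.ofReal (u ^ (-(1:ℝ)/2)) with hΦ
  have hwm : Measurable w := by
    apply ENNReal.measurable_ofReal.comp
    measurability
  have hΦm : Measurable Φ := by
    refine Measurable.mul (f := fun u => (ENNReal.ofReal (g u))^2) (g := fun u => ENNReal.ofReal (u ^ (-(1:ℝ)/2))) ?_ ?_
    · exact (ENNReal.measurable_ofReal.comp hmeas).pow_const 2
    · apply ENNReal.measurable_ofReal.comp
      measurability
  have hΦnt : ∀ u, Φ u ≠ ⊤ := fun u =>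
    ENNReal.mul_ne_top (by simp [ENNReal.pow_ne_top, ENNReal.ofReal_ne_top]) ENNReal.ofReal_ne_top
  set f : ℝ → ℝ → ℝ≥0∞ := fun x u => (Ioi x).indicator (fun u => w x * Φ u) u with hf
  have step1 : (∫⁻ x in Ioc (0:ℝ) 1, w x * ∫⁻ u in Ioc x 1, Φ u)
      = ∫⁻ x, (∫⁻ u, f x u ∂ν) ∂ν := by
    apply setLIntegral_congr_fun measurableSet_Ioc
    intro x hx
    beta_reduce
    rw [← lintegral_const_mul' _ _ ENNReal.ofReal_ne_top]
    rw [hf]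
    rw [lintegral_indicator measurableSet_Ioi, hν, Measure.restrict_restrict measurableSet_Ioi]
    have hseteq : Ioi x ∩ Ioc (0:ℝ) 1 = Ioc x 1 := by
      ext t
      simp only [mem_Ioi, mem_inter_iff, mem_Ioc]
      constructor
      · rintro ⟨h1, _, h3⟩; exact ⟨h1, h3⟩
      · rintro ⟨h1, h2⟩; exact ⟨h1, lt_trans hx.1 h1, h2⟩
    rw [hseteq]
  have huncurry : Function.uncurry f =
      ({p : ℝ × ℝ | p.1 < p.2}).indicator (fun p => w p.1 * Φ p.2) := by
    funext p
    rcases p with ⟨x, u⟩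
    by_cases h : x < u
    · simp [hf, Function.uncurry, Set.indicator_of_mem, h, Set.mem_Ioi]
    · simp [hf, Function.uncurry, Set.indicator_of_notMem, h, Set.mem_Ioi]
  have hswap : ∫⁻ x, (∫⁻ u, f x u ∂ν) ∂ν = ∫⁻ u, (∫⁻ x, f x u ∂ν) ∂ν := by
    apply lintegral_lintegral_swap
    rw [huncurry]
    exact (((hwm.comp measurable_fst).mul (hΦm.comp measurable_snd)).indicator
      (measurableSet_lt measurable_fst measurable_snd)).aemeasurable
  have step3 : (∫⁻ u, (∫⁻ x, f x u ∂ν) ∂ν) = ∫⁻ u in Ioc (0:ℝ) 1, 4 * (ENNReal.ofReal (g u))^2 := by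
    apply setLIntegral_congr_fun measurableSet_Ioc
    intro u hu
    have huEq : ∀ x, f x u = (Iio u).indicator (fun x => w x * Φ u) x := by
      intro x
      by_cases h : x < u
      · simp [hf, Set.indicator_of_mem, h, Set.mem_Ioi, Set.mem_Iio]
      · simp [hf, Set.indicator_of_notMem, h, Set.mem_Ioi, Set.mem_Iio]
    beta_reduce
    rw [lintegral_congr huEq]
    rw [lintegral_indicator measurableSet_Iio, hν, Measure.restrict_restrict measurableSet_Iio]
    have hseteq : Iio u ∩ Ioc (0:ℝ) 1 = Ioo 0 u := by
      ext t
      simp only [mem_Iio, mem_inter_iff, mem_Ioc, mem_Ioo]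
      constructor
      · rintro ⟨h1, h2, h3⟩; exact ⟨h2, h1⟩
      · rintro ⟨h1, h2⟩; exact ⟨h2, h1, le_trans (le_of_lt h2) hu.2⟩
    rw [hseteq, lintegral_mul_const' _ _ (hΦnt u), aux_pow12 hu.1]
    have h4 : ENNReal.ofReal (4 * u ^ ((1:ℝ)/2)) = 4 * ENNReal.ofReal (u ^ ((1:ℝ)/2)) := by
      rw [ENNReal.ofReal_mul (by norm_num)]
      norm_num
    have key : ENNReal.ofReal (u ^ ((1:ℝ)/2)) * ENNReal.ofReal (u ^ (-(1:ℝ)/2)) = 1 := by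
      rw [← ENNReal.ofReal_mul (Real.rpow_nonneg hu.1.le _), ← Real.rpow_add hu.1]
      norm_num
    rw [h4, hΦ]
    calc 4 * ENNReal.ofReal (u ^ ((1:ℝ)/2)) *
          (ENNReal.ofReal (g u) ^ 2 * ENNReal.ofReal (u ^ (-(1:ℝ)/2)))
        = 4 * ENNReal.ofReal (g u) ^ 2 *
          (ENNReal.ofReal (u ^ ((1:ℝ)/2)) * ENNReal.ofReal (u ^ (-(1:ℝ)/2))) := by ring
      _ = 4 * ENNReal.ofReal (g u) ^ 2 := by rw [key, mul_one]
  rw [step1, hswap, step3]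
  rw [lintegral_const_mul' _ _ (by norm_num : (4:ℝ≥0∞) ≠ ⊤)]


theorem lstar_four_competitive
    (g : ℝ → ℝ) (hmeas : Measurable g)
    (hnn : ∀ x ∈ Set.Ioc (0:ℝ) 1, 0 ≤ g x)
    (hmono : AntitoneOn g (Set.Ioc (0:ℝ) 1))
    (hsq : MeasureTheory.IntegrableOn (fun x => (g x)^2) (Set.Ioc (0:ℝ) 1)) :
    (∫ x in (0:ℝ)..1, (∫ u in x..1, g u / u)^2) ≤ 4 * ∫ x in (0:ℝ)..1, (g x)^2 := by
  set H : ℝ → ℝ≥0∞ := fun x => ∫⁻ u in Ioc x 1, ENNReal.ofReal (g u / u) with hH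
  have hHanti : Antitone H := fun x y hxy => lintegral_mono_set (Ioc_subset_Ioc_left hxy)
  have hHmeas : Measurable H := hHanti.measurable
  have hpt : ∀ x ∈ Ioc (0:ℝ) 1, (∫ u in x..1, g u / u) = (H x).toReal := by
    intro x hx
    rw [intervalIntegral.integral_of_le hx.2]
    rw [MeasureTheory.integral_eq_lintegral_of_nonneg_ae]
    · filter_upwards [ae_restrict_mem measurableSet_Ioc] with u hu
      exact div_nonneg (hnn u ⟨lt_trans hx.1 hu.1, hu.2⟩) (le_of_lt (lt_trans hx.1 hu.1))
    · exact (hmeas.div measurable_id).aestronglyMeasurable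
  rw [intervalIntegral.integral_of_le (by norm_num : (0:ℝ) ≤ 1),
    intervalIntegral.integral_of_le (by norm_num : (0:ℝ) ≤ 1)]
  have hLcongr : ∫ x in Ioc (0:ℝ) 1, (∫ u in x..1, g u / u)^2
      = ∫ x in Ioc (0:ℝ) 1, ((H x).toReal)^2 := by
    apply setIntegral_congr_fun measurableSet_Ioc
    intro x hx
    simp only
    rw [hpt x hx]
  have hL2 : ∫ x in Ioc (0:ℝ) 1, ((H x).toReal)^2
      = (∫⁻ x in Ioc (0:ℝ) 1, ENNReal.ofReal (((H x).toReal)^2)).toReal := by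
    rw [MeasureTheory.integral_eq_lintegral_of_nonneg_ae]
    · filter_upwards with x using sq_nonneg _
    · exact ((hHmeas.ennreal_toReal).pow_const 2).aestronglyMeasurable
  have hle1 : (∫⁻ x in Ioc (0:ℝ) 1, ENNReal.ofReal (((H x).toReal)^2))
      ≤ ∫⁻ x in Ioc (0:ℝ) 1, (H x)^2 := by
    apply lintegral_mono
    intro x
    calc ENNReal.ofReal (((H x).toReal)^2)
        = ENNReal.ofReal (((H x)^2).toReal) := by rw [ENNReal.toReal_pow]
      _ ≤ (H x)^2 := ENNReal.ofReal_toReal_le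
  have hle2 : (∫⁻ x in Ioc (0:ℝ) 1, (H x)^2)
      ≤ 4 * ∫⁻ u in Ioc (0:ℝ) 1, (ENNReal.ofReal (g u))^2 := by
    refine le_trans ?_ (aux_tonelli g hmeas)
    refine lintegral_mono_ae ?_
    filter_upwards [ae_restrict_mem measurableSet_Ioc] with x hx
    exact aux_cs g hmeas hx.1 hx.2
  have hcongrF : (∫⁻ u in Ioc (0:ℝ) 1, (ENNReal.ofReal (g u))^2)
      = ∫⁻ u in Ioc (0:ℝ) 1, ENNReal.ofReal ((g u)^2) := by
    apply setLIntegral_congr_fun measurableSet_Ioc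
    intro u hu
    beta_reduce
    rw [← ENNReal.ofReal_pow (hnn u hu)]
  have hfin : (∫⁻ u in Ioc (0:ℝ) 1, ENNReal.ofReal ((g u)^2)) ≠ ⊤ := by
    have h1 := hsq.hasFiniteIntegral
    rw [hasFiniteIntegral_iff_ofReal ?hge] at h1
    · exact h1.ne
    · filter_upwards with x using sq_nonneg _
  have hRHS : ∫ x in Ioc (0:ℝ) 1, (g x)^2
      = (∫⁻ u in Ioc (0:ℝ) 1, ENNReal.ofReal ((g u)^2)).toReal := by
    rw [MeasureTheory.integral_eq_lintegral_of_nonneg_ae]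
    · filter_upwards with x using sq_nonneg _
    · exact (hmeas.pow_const 2).aestronglyMeasurable
  rw [hLcongr, hL2, hRHS]
  have hchain : (∫⁻ x in Ioc (0:ℝ) 1, ENNReal.ofReal (((H x).toReal)^2))
      ≤ 4 * ∫⁻ u in Ioc (0:ℝ) 1, ENNReal.ofReal ((g u)^2) := by
    rw [← hcongrF]
    exact le_trans hle1 hle2
  have h4fin : (4:ℝ≥0∞) * (∫⁻ u in Ioc (0:ℝ) 1, ENNReal.ofReal ((g u)^2)) ≠ ⊤ :=
    ENNReal.mul_ne_top (by norm_num) hfin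
  calc (∫⁻ x in Ioc (0:ℝ) 1, ENNReal.ofReal (((H x).toReal)^2)).toReal
      ≤ ((4:ℝ≥0∞) * ∫⁻ u in Ioc (0:ℝ) 1, ENNReal.ofReal ((g u)^2)).toReal :=
        ENNReal.toReal_mono h4fin hchain
    _ = 4 * (∫⁻ u in Ioc (0:ℝ) 1, ENNReal.ofReal ((g u)^2)).toReal := by
        rw [ENNReal.toReal_mul]
        norm_num
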